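/- arXiv:1806.07791 — 5 statements merged into one kernel-verified Lean document; each statement's English description precedes it below -/
import Mathlib

section
/- Let Σ₀ and Ω be SPD real n×n matrices and let L be an invertible real n×n matrix with Ω = L Lᵀ. Then the matrix Λ := (1/2) (Lᵀ)⁻¹ √(Lᵀ Σ₀ L) L⁻¹ is symmetric positive definite and satisfies Λ Ω Λ = (1/4) Σ₀. -/
open Matrix
open Classical in
/-- The unique positive semidefinite square root of a positive semidefinite
real matrix (defined as `0` on matrices that are not positive semidefinite). -/
noncomputable def psdSqrt {n : ℕ} (A : Matrix (Fin n) (Fin n) ℝ) : Matrix (Fin n) (Fin n) ℝ :=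
  if h : A.PosSemidef then
    (h.1.eigenvectorUnitary : Matrix (Fin n) (Fin n) ℝ) *
      diagonal ((↑) ∘ (Real.sqrt ·) ∘ h.1.eigenvalues) *
      (star h.1.eigenvectorUnitary : Matrix (Fin n) (Fin n) ℝ)
  else 0

open scoped MatrixOrder

lemma aux_posDef_of_posSemidef {n : ℕ} {A : Matrix (Fin n) (Fin n) ℝ}
    (hA : A.PosSemidef) (hd : IsUnit A.det) : A.PosDef := by
  refine Matrix.PosDef.of_dotProduct_mulVec_pos hA.1 (fun x hx => ?_)
  have h0 : A *ᵥ x ≠ 0 := fun h => hx (by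
    have := Matrix.mulVec_injective_iff_isUnit.2
      ((Matrix.isUnit_iff_isUnit_det A).2 hd) (a₁ := x) (a₂ := 0)
    simpa [h] using this)
  have hne : dotProduct (star x) (A *ᵥ x) ≠ 0 :=
    fun h => h0 ((hA.dotProduct_mulVec_zero_iff x).1 h)
  exact lt_of_le_of_ne (hA.dotProduct_mulVec_nonneg x) (Ne.symm hne)

lemma aux_posDef_conj {n : ℕ} {A B : Matrix (Fin n) (Fin n) ℝ}
    (hA : A.PosDef) (hB : IsUnit B.det) : (Bᵀ * A * B).PosDef := by
  refine Matrix.PosDef.of_dotProduct_mulVec_pos ?_ (fun x hx => ?_)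
  · have := Matrix.isHermitian_conjTranspose_mul_mul B hA.1
    simpa using this
  · have hBx : B *ᵥ x ≠ 0 := fun h => hx (by
      have := Matrix.mulVec_injective_iff_isUnit.2
        ((Matrix.isUnit_iff_isUnit_det B).2 hB) (a₁ := x) (a₂ := 0)
      simpa [h] using this)
    have heq : dotProduct (star x) ((Bᵀ * A * B) *ᵥ x)
        = dotProduct (star (B *ᵥ x)) (A *ᵥ (B *ᵥ x)) := by
      rw [← Matrix.mulVec_mulVec, ← Matrix.mulVec_mulVec, Matrix.dotProduct_mulVec,
        Matrix.vecMul_transpose]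
      simp [star]
    rw [heq]
    exact hA.dotProduct_mulVec_pos hBx

lemma aux_posDef_smul {n : ℕ} {A : Matrix (Fin n) (Fin n) ℝ} {c : ℝ}
    (hA : A.PosDef) (hc : 0 < c) : (c • A).PosDef := by
  refine Matrix.PosDef.of_dotProduct_mulVec_pos ?_ (fun x hx => ?_)
  · have h := hA.1
    unfold Matrix.IsHermitian at *
    rw [Matrix.conjTranspose_smul]
    simp only [starRingEnd_apply, star_trivial]
    rw [h]
  · rw [Matrix.smul_mulVec, dotProduct_smul]
    exact smul_pos hc (hA.dotProduct_mulVec_pos hx)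

/-- With `Σ₀`, `Ω` SPD and `Ω = L Lᵀ` for invertible `L`, the matrix
`Λ = (1/2) (Lᵀ)⁻¹ √(Lᵀ Σ₀ L) L⁻¹` is symmetric positive definite and
satisfies `Λ Ω Λ = (1/4) Σ₀`. -/
theorem stmt0 {n : ℕ} (S0 W L : Matrix (Fin n) (Fin n) ℝ)
    (hS0 : S0.PosDef) (hW : W.PosDef) (hL : IsUnit L.det)
    (hfac : W = L * Lᵀ)
    (Lam : Matrix (Fin n) (Fin n) ℝ)
    (hLam : Lam = (1 / 2 : ℝ) • ((Lᵀ)⁻¹ * psdSqrt (Lᵀ * S0 * L) * L⁻¹)) :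
    Lamᵀ = Lam ∧ Lam.PosDef ∧ Lam * W * Lam = (1 / 4 : ℝ) • S0 := by
  have hLT : IsUnit (Lᵀ).det := by rwa [Matrix.det_transpose]
  have hC : (Lᵀ * S0 * L).PosDef := aux_posDef_conj hS0 hL
  have hCsd : (Lᵀ * S0 * L).PosSemidef := hC.posSemidef
  have hsqrt : psdSqrt (Lᵀ * S0 * L) = CFC.sqrt (Lᵀ * S0 * L) := by
    rw [psdSqrt, dif_pos hCsd, CFC.sqrt_eq_real_sqrt _ (nonneg_iff_posSemidef.2 hCsd),
      cfcₙ_eq_cfc, hCsd.1.cfc_eq]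
    rfl
  set M := CFC.sqrt (Lᵀ * S0 * L) with hM
  have hMsd : M.PosSemidef := nonneg_iff_posSemidef.1 (CFC.sqrt_nonneg _)
  have hMM : M * M = Lᵀ * S0 * L := CFC.sqrt_mul_sqrt_self _ (nonneg_iff_posSemidef.2 hCsd)
  have hMdet : IsUnit M.det := by
    have hsq : M.det * M.det = (Lᵀ * S0 * L).det := by
      rw [← Matrix.det_mul, hMM]
    have hd : (Lᵀ * S0 * L).det ≠ 0 := hC.det_pos.ne'
    have hne : M.det ≠ 0 := fun h => hd (by rw [← hsq, h, mul_zero])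
    exact hne.isUnit
  have hMpd : M.PosDef := aux_posDef_of_posSemidef hMsd hMdet
  have hMsymm : Mᵀ = M := hMsd.1
  have hLamEq : Lam = (1 / 2 : ℝ) • ((Lᵀ)⁻¹ * M * L⁻¹) := by rw [hLam, hsqrt]
  refine ⟨?_, ?_, ?_⟩
  · rw [hLamEq]
    simp only [Matrix.transpose_smul, Matrix.transpose_mul, Matrix.transpose_nonsing_inv,
      Matrix.transpose_transpose, hMsymm]
    rw [Matrix.mul_assoc]
  · rw [hLamEq]
    have hLinv : (Lᵀ)⁻¹ = (L⁻¹)ᵀ := (Matrix.transpose_nonsing_inv L).symm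
    have h1 : ((L⁻¹)ᵀ * M * L⁻¹).PosDef :=
      aux_posDef_conj hMpd (Matrix.isUnit_nonsing_inv_det L hL)
    rw [hLinv]
    exact aux_posDef_smul h1 (by norm_num)
  · rw [hLamEq, hfac]
    have key : ((Lᵀ)⁻¹ * M * L⁻¹) * (L * Lᵀ) * ((Lᵀ)⁻¹ * M * L⁻¹)
        = (Lᵀ)⁻¹ * (Lᵀ * S0 * L) * L⁻¹ := by
      have h1 : L⁻¹ * (L * Lᵀ) = Lᵀ := by
        rw [← Matrix.mul_assoc, Matrix.nonsing_inv_mul _ hL, Matrix.one_mul]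
      have h2 : Lᵀ * ((Lᵀ)⁻¹ * M * L⁻¹) = M * L⁻¹ := by
        rw [← Matrix.mul_assoc, ← Matrix.mul_assoc, Matrix.mul_nonsing_inv _ hLT,
          Matrix.one_mul]
      calc ((Lᵀ)⁻¹ * M * L⁻¹) * (L * Lᵀ) * ((Lᵀ)⁻¹ * M * L⁻¹)
          = (Lᵀ)⁻¹ * M * (L⁻¹ * (L * Lᵀ) * ((Lᵀ)⁻¹ * M * L⁻¹)) := by
            simp only [Matrix.mul_assoc]
        _ = (Lᵀ)⁻¹ * M * (M * L⁻¹) := by rw [h1, h2]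
        _ = (Lᵀ)⁻¹ * (M * M) * L⁻¹ := by simp only [Matrix.mul_assoc]
        _ = (Lᵀ)⁻¹ * (Lᵀ * S0 * L) * L⁻¹ := by rw [hMM]
    rw [Matrix.smul_mul, Matrix.mul_smul, Matrix.smul_mul, smul_smul, key]
    have hfin : (Lᵀ)⁻¹ * (Lᵀ * S0 * L) * L⁻¹ = S0 := by
      rw [← Matrix.mul_assoc, ← Matrix.mul_assoc, Matrix.nonsing_inv_mul _ hLT,
        Matrix.one_mul, Matrix.mul_assoc, Matrix.mul_nonsing_inv _ hL, Matrix.mul_one]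
    rw [hfin]
    norm_num
end

section
/- Let Σ₀ and Ω be SPD real n×n matrices, and let Λ be a real n×n matrix whose symmetric part Λ_S := (1/2)(Λ + Λᵀ) is positive definite. If Λ satisfies the quadratic matrix equation (Λ Λ_S⁻¹ − 2·I)·(1/4)Σ₀ + Λ Ω Λ_S = 0, then Λ is symmetric (its antisymmetric part vanishes) and Λ Ω Λ = (1/4) Σ₀. -/
open Matrix
open MatrixOrder

private lemma trace_conj_zero {n : ℕ} {L C : Matrix (Fin n) (Fin n) ℝ}
    (hL : L.PosDef) (h : (Cᵀ * (L * C)).trace = 0) : C = 0 := by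
  have hterm : ∀ j : Fin n,
      (Cᵀ * (L * C)) j j = (fun i => C i j) ⬝ᵥ (L *ᵥ fun i => C i j) := by
    intro j
    simp [mul_apply, mulVec, dotProduct]
  have hsum : ∑ j, ((fun i => C i j) ⬝ᵥ (L *ᵥ fun i => C i j)) = 0 := by
    rw [← h, Matrix.trace]
    simp [Matrix.diag, hterm]
  have hnn : ∀ j ∈ Finset.univ, (0:ℝ) ≤ ((fun i => C i j) ⬝ᵥ (L *ᵥ fun i => C i j)) :=
    fun j _ => hL.posSemidef.dotProduct_mulVec_nonneg _
  have hz := (Finset.sum_eq_zero_iff_of_nonneg hnn).mp hsum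
  ext i j
  simp only [Matrix.zero_apply]
  by_contra hij
  have hcol : (fun i => C i j) ≠ 0 := by
    intro h0
    exact hij (by simpa using congrFun h0 i)
  exact absurd (hz j (Finset.mem_univ j)) (ne_of_gt (hL.dotProduct_mulVec_pos hcol))

private lemma smul_posDef {n : ℕ} {M : Matrix (Fin n) (Fin n) ℝ} {c : ℝ}
    (hc : 0 < c) (hM : M.PosDef) : (c • M).PosDef := by
  refine Matrix.PosDef.of_dotProduct_mulVec_pos ?_ ?_
  · show (c • M)ᵀ = c • M
    rw [transpose_smul, show Mᵀ = M from hM.1]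
  · intro x hx
    have : star x ⬝ᵥ (c • M) *ᵥ x = c * (star x ⬝ᵥ M *ᵥ x) := by
      rw [smul_mulVec, dotProduct_smul, smul_eq_mul]
    rw [this]
    exact mul_pos hc (hM.dotProduct_mulVec_pos hx)

/-- If the symmetric part `Λ_S = (1/2)(Λ + Λᵀ)` of `Λ` is positive definite and `Λ`
satisfies the quadratic matrix equation
`(Λ Λ_S⁻¹ − 2 I) (1/4) Σ₀ + Λ Ω Λ_S = 0` (with `Σ₀`, `Ω` SPD), then `Λ` is symmetric
and `Λ Ω Λ = (1/4) Σ₀`. -/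
theorem stmt2 {n : ℕ} (S0 W Lam LamS : Matrix (Fin n) (Fin n) ℝ)
    (hS0 : S0.PosDef) (hW : W.PosDef)
    (hLamS : LamS = (1 / 2 : ℝ) • (Lam + Lamᵀ))
    (hPD : LamS.PosDef)
    (heq : (Lam * LamS⁻¹ - (2 : ℝ) • (1 : Matrix (Fin n) (Fin n) ℝ)) * ((1 / 4 : ℝ) • S0)
        + Lam * W * LamS = 0) :
    Lamᵀ = Lam ∧ Lam * W * Lam = (1 / 4 : ℝ) • S0 := by
  set T : Matrix (Fin n) (Fin n) ℝ := (1 / 4 : ℝ) • S0 with hTdef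
  set J : Matrix (Fin n) (Fin n) ℝ := LamS⁻¹ with hJdef
  set A : Matrix (Fin n) (Fin n) ℝ := Lam - LamS with hAdef
  -- basic symmetry facts
  have hLSt : LamSᵀ = LamS := hPD.1
  have hWt : Wᵀ = W := hW.1
  have hS0t : S0ᵀ = S0 := hS0.1
  have hTt : Tᵀ = T := by rw [hTdef, transpose_smul, hS0t]
  have hTpd : T.PosDef := smul_posDef (by norm_num) hS0
  have hLSu : IsUnit LamS.det := (Matrix.isUnit_iff_isUnit_det _).mp hPD.isUnit
  have hJ1 : LamS * J = 1 := mul_nonsing_inv _ hLSu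
  have hJ2 : J * LamS = 1 := nonsing_inv_mul _ hLSu
  have hJt : Jᵀ = J := by
    rw [hJdef, transpose_nonsing_inv, hLSt]
  -- antisymmetry of A
  have hLamT : Lamᵀ = LamS - A := by
    rw [hAdef, hLamS]
    module
  have hAT : Aᵀ = -A := by
    calc Aᵀ = (Lam - LamS)ᵀ := by rw [hAdef]
      _ = Lamᵀ - LamS := by rw [transpose_sub, hLSt]
      _ = (LamS - A) - LamS := by rw [hLamT]
      _ = -A := by abel
  have hLam : Lam = LamS + A := by rw [hAdef]; abel
  -- massage the main equation
  have heq2 : Lam * (J * T) + Lam * W * LamS = T + T := by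
    have h2 : ((2:ℝ) • (1 : Matrix (Fin n) (Fin n) ℝ)) * T = T + T := by
      rw [smul_mul_assoc, one_mul, two_smul]
    have key : (Lam * J - (2:ℝ) • (1 : Matrix (Fin n) (Fin n) ℝ)) * T + Lam * W * LamS
        = Lam * (J * T) + Lam * W * LamS - (T + T) := by
      rw [sub_mul, h2, mul_assoc]
      abel
    have h0 : Lam * (J * T) + Lam * W * LamS - (T + T) = 0 := by rw [← key]; exact heq
    exact sub_eq_zero.mp h0
  have hLJT : LamS * (J * T) = T := by rw [← mul_assoc, hJ1, one_mul]
  have hE : A * (J * T) + A * W * LamS = T - LamS * W * LamS := by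
    have h1 : (LamS + A) * (J * T) + (LamS + A) * W * LamS = T + T := by
      rw [← hLam]; exact heq2
    have key : A * (J * T) + A * W * LamS - (T - LamS * W * LamS)
        = ((LamS + A) * (J * T) + (LamS + A) * W * LamS) - (T + T) := by
      rw [add_mul, add_mul, add_mul, hLJT]
      abel
    rw [h1, sub_self] at key
    exact sub_eq_zero.mp key
  -- transpose of hE
  have hEt : T * (J * A) + LamS * (W * A) = LamS * W * LamS - T := by
    calc T * (J * A) + LamS * (W * A)
        = -((A * (J * T) + A * W * LamS)ᵀ) := by
          simp only [transpose_add, transpose_mul, hAT, hJt, hTt, hWt, hLSt]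
          noncomm_ring
      _ = -((T - LamS * W * LamS)ᵀ) := by rw [hE]
      _ = LamS * W * LamS - T := by
          simp only [transpose_sub, transpose_mul, hTt, hWt, hLSt]
          noncomm_ring
  -- the key antisymmetric relation
  have E1 : (A * (W * LamS) + A * (J * T)) + (LamS * (W * A) + T * (J * A)) = 0 := by
    have key : (A * (W * LamS) + A * (J * T)) + (LamS * (W * A) + T * (J * A))
        = (A * (J * T) + A * W * LamS - (T - LamS * W * LamS))
          + (T * (J * A) + LamS * (W * A) - (LamS * W * LamS - T)) := by
      noncomm_ring
    rw [key, sub_eq_zero_of_eq hE, sub_eq_zero_of_eq hEt, add_zero]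
  have eq1 : LamS * (J * A * J) * (LamS * W * LamS + T) = A * (W * LamS) + A * (J * T) := by
    calc LamS * (J * A * J) * (LamS * W * LamS + T)
        = (LamS * J) * (A * ((J * LamS) * (W * LamS))) + (LamS * J) * (A * (J * T)) := by
          noncomm_ring
      _ = A * (W * LamS) + A * (J * T) := by rw [hJ1, hJ2]; noncomm_ring
  have eq2 : (LamS * W * LamS + T) * (J * A * J * LamS) = LamS * (W * A) + T * (J * A) := by
    calc (LamS * W * LamS + T) * (J * A * J * LamS)
        = ((LamS * W) * (LamS * J)) * (A * (J * LamS)) + T * ((J * A) * (J * LamS)) := by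
          noncomm_ring
      _ = LamS * (W * A) + T * (J * A) := by rw [hJ1, hJ2]; noncomm_ring
  have E2 : LamS * (J * A * J) * (LamS * W * LamS + T)
      + (LamS * W * LamS + T) * (J * A * J * LamS) = 0 := by
    rw [eq1, eq2]; exact E1
  have E3 : (J * A * J) * (LamS * (J * A * J) * (LamS * W * LamS + T))
      + (J * A * J) * ((LamS * W * LamS + T) * (J * A * J * LamS)) = 0 := by
    rw [← mul_add, E2, mul_zero]
  -- trace argument
  have htr : ((J * A * J) * (LamS * ((J * A * J) * (LamS * W * LamS + T)))).trace = 0 := by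
    have h0 := congrArg Matrix.trace E3
    rw [trace_add, trace_zero] at h0
    have hc : ((J * A * J) * ((LamS * W * LamS + T) * (J * A * J * LamS))).trace
        = ((J * A * J) * (LamS * ((J * A * J) * (LamS * W * LamS + T)))).trace := by
      calc ((J * A * J) * ((LamS * W * LamS + T) * (J * A * J * LamS))).trace
          = (((J * A * J) * (LamS * W * LamS + T)) * ((J * A * J) * LamS)).trace := by
            congr 1; noncomm_ring
        _ = (((J * A * J) * LamS) * ((J * A * J) * (LamS * W * LamS + T))).trace :=
            trace_mul_comm _ _
        _ = ((J * A * J) * (LamS * ((J * A * J) * (LamS * W * LamS + T)))).trace := by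
            congr 1; noncomm_ring
    have hc2 : ((J * A * J) * (LamS * (J * A * J) * (LamS * W * LamS + T))).trace
        = ((J * A * J) * (LamS * ((J * A * J) * (LamS * W * LamS + T)))).trace := by
      congr 1; noncomm_ring
    rw [hc, hc2] at h0
    linarith
  -- positive definiteness of K and its square root
  have hKpsd1 : (LamS * W * LamS).PosSemidef := by
    have := hW.posSemidef.mul_mul_conjTranspose_same LamS
    rwa [show LamSᴴ = LamS from hLSt] at this
  have hKpd : (LamS * W * LamS + T).PosDef := Matrix.PosDef.posSemidef_add hKpsd1 hTpd
  have hKpsd := hKpd.posSemidef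
  have hRR : CFC.sqrt (LamS * W * LamS + T) * CFC.sqrt (LamS * W * LamS + T) = LamS * W * LamS + T :=
    CFC.sqrt_mul_sqrt_self _ (Matrix.nonneg_iff_posSemidef.mpr hKpsd)
  have hRt : (CFC.sqrt (LamS * W * LamS + T))ᵀ = CFC.sqrt (LamS * W * LamS + T) :=
    (Matrix.nonneg_iff_posSemidef.mp (CFC.sqrt_nonneg _)).isHermitian
  set R : Matrix (Fin n) (Fin n) ℝ := CFC.sqrt (LamS * W * LamS + T) with hRdef
  have hRu : IsUnit R.det := by
    have hu : IsUnit (LamS * W * LamS + T).det :=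
      (Matrix.isUnit_iff_isUnit_det _).mp hKpd.isUnit
    rw [← hRR, det_mul] at hu
    exact isUnit_of_mul_isUnit_left hu
  have hR1 : R * R⁻¹ = 1 := mul_nonsing_inv _ hRu
  have hBt : (J * A * J)ᵀ = -(J * A * J) := by
    simp only [transpose_mul, hJt, hAT]
    noncomm_ring
  have hCt : ((J * A * J) * R)ᵀ = -(R * (J * A * J)) := by
    rw [transpose_mul, hRt, hBt]
    noncomm_ring
  have htrC : (((J * A * J) * R)ᵀ * (LamS * ((J * A * J) * R))).trace = 0 := by
    rw [hCt]
    have e : (-(R * (J * A * J))) * (LamS * ((J * A * J) * R))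
        = -(R * ((J * A * J) * (LamS * ((J * A * J) * R)))) := by noncomm_ring
    rw [e, trace_neg, trace_mul_comm]
    have e2 : ((J * A * J) * (LamS * ((J * A * J) * R))) * R
        = (J * A * J) * (LamS * ((J * A * J) * (R * R))) := by noncomm_ring
    rw [e2, hRR, htr, neg_zero]
  have hC0 : (J * A * J) * R = 0 := trace_conj_zero hPD htrC
  have hB0 : J * A * J = 0 := by
    have h : (J * A * J) * (R * R⁻¹) = 0 := by rw [← mul_assoc, hC0, zero_mul]
    rwa [hR1, mul_one] at h
  have hA0 : A = 0 := by
    have hAeq : A = LamS * (J * A * J) * LamS := by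
      calc A = (LamS * J) * (A * (J * LamS)) := by rw [hJ1, hJ2]; noncomm_ring
        _ = LamS * (J * A * J) * LamS := by noncomm_ring
    rw [hB0, mul_zero, zero_mul] at hAeq
    exact hAeq
  have hLamEq : Lam = LamS := by
    rw [hLam, hA0, add_zero]
  have h1 : Lam * (J * T) = T := by rw [hLamEq]; exact hLJT
  rw [h1] at heq2
  have h3 : Lam * W * LamS = T := add_left_cancel heq2
  constructor
  · rw [hLamEq]; exact hLSt
  · rw [hLamEq] at h3 ⊢
    exact h3
end

section
/- Let ω₁ > 0, ω₂ > 0 and ρ ∈ (−1, 1). Set Δ := √(ω₁ + ω₂ + 2√(ω₁ω₂)√(1 − ρ²)), Σ₀ := [[1, ρ], [ρ, 1]], Ω := diag(ω₁, ω₂), and Λ := (1/(2Δ))·[[1 + √(ω₂/ω₁)·√(1 − ρ²), ρ], [ρ, 1 + √(ω₁/ω₂)·√(1 − ρ²)]]. Then Λ is a symmetric positive definite 2×2 real matrix and satisfies 4·Λ·Ω·Λ = Σ₀. -/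
open Matrix

set_option maxHeartbeats 1600000 in
/-- Explicit solution of the two-dimensional Kyle model: with `ω₁, ω₂ > 0`, `ρ ∈ (−1,1)`,
`Δ = √(ω₁ + ω₂ + 2√(ω₁ω₂)√(1−ρ²))`, `Σ₀ = [[1,ρ],[ρ,1]]`, `Ω = diag(ω₁,ω₂)`, the matrix
`Λ = (1/(2Δ)) [[1 + √(ω₂/ω₁)√(1−ρ²), ρ],[ρ, 1 + √(ω₁/ω₂)√(1−ρ²)]]` is SPD and satisfies
`4 Λ Ω Λ = Σ₀`. -/
theorem stmt7 (ω₁ ω₂ ρ : ℝ) (hω₁ : 0 < ω₁) (hω₂ : 0 < ω₂)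
    (hρ₁ : -1 < ρ) (hρ₂ : ρ < 1)
    (Δ : ℝ) (hΔ : Δ = Real.sqrt (ω₁ + ω₂ + 2 * Real.sqrt (ω₁ * ω₂) * Real.sqrt (1 - ρ ^ 2)))
    (S0 W Lam : Matrix (Fin 2) (Fin 2) ℝ)
    (hS0 : S0 = !![1, ρ; ρ, 1])
    (hW : W = !![ω₁, 0; 0, ω₂])
    (hLam : Lam = (1 / (2 * Δ)) •
      !![1 + Real.sqrt (ω₂ / ω₁) * Real.sqrt (1 - ρ ^ 2), ρ;
         ρ, 1 + Real.sqrt (ω₁ / ω₂) * Real.sqrt (1 - ρ ^ 2)]) :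
    Lamᵀ = Lam ∧ Lam.PosDef ∧ (4 : ℝ) • (Lam * W * Lam) = S0 := by
  have hρs : 0 < 1 - ρ ^ 2 := by nlinarith
  set s := Real.sqrt (1 - ρ ^ 2) with hsdef
  have hs : 0 < s := Real.sqrt_pos.2 hρs
  have hs2 : s ^ 2 = 1 - ρ ^ 2 := Real.sq_sqrt hρs.le
  set a := Real.sqrt (ω₂ / ω₁) with hadef
  set b := Real.sqrt (ω₁ / ω₂) with hbdef
  have ha : 0 < a := Real.sqrt_pos.2 (by positivity)
  have hb : 0 < b := Real.sqrt_pos.2 (by positivity)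
  have ha2 : a ^ 2 * ω₁ = ω₂ := by
    rw [hadef, Real.sq_sqrt (by positivity)]; field_simp
  have hb2 : b ^ 2 * ω₂ = ω₁ := by
    rw [hbdef, Real.sq_sqrt (by positivity)]; field_simp
  have hab : a * b = 1 := by
    rw [hadef, hbdef, ← Real.sqrt_mul (by positivity)]
    rw [show ω₂ / ω₁ * (ω₁ / ω₂) = 1 by field_simp]
    exact Real.sqrt_one
  have hba : b * ω₂ = a * ω₁ := by
    linear_combination (-(b * ω₂)) * hab + a * hb2
  have hg : Real.sqrt (ω₁ * ω₂) = a * ω₁ := by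
    rw [hadef, show ω₁ * ω₂ = (ω₂ / ω₁) * ω₁ ^ 2 by field_simp,
      Real.sqrt_mul (by positivity), Real.sqrt_sq hω₁.le]
  have hΔ2 : Δ ^ 2 = ω₁ + ω₂ + 2 * (a * ω₁) * s := by
    rw [hΔ, hg, Real.sq_sqrt (by positivity)]
  have hΔpos : 0 < Δ := by
    rw [hΔ, hg]; exact Real.sqrt_pos.2 (by positivity)
  have hΔne : Δ ≠ 0 := hΔpos.ne'
  have key : (!![1 + a * s, ρ; ρ, 1 + b * s] * !![ω₁, 0; 0, ω₂] *
      !![1 + a * s, ρ; ρ, 1 + b * s]) = (Δ ^ 2) • !![(1:ℝ), ρ; ρ, 1] := by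
    ext i j
    fin_cases i <;> fin_cases j <;>
      simp [Matrix.mul_apply, Fin.sum_univ_two]
    · linear_combination -hΔ2 + s ^ 2 * ha2 + ω₂ * hs2
    · linear_combination -ρ * hΔ2 + ρ * s * hba
    · linear_combination -ρ * hΔ2 + ρ * s * hba
    · linear_combination -hΔ2 + 2 * s * hba + s ^ 2 * hb2 + ω₁ * hs2
  refine ⟨?_, ?_, ?_⟩
  · subst hLam; ext i j; fin_cases i <;> fin_cases j <;> simp
  · rw [Matrix.posDef_iff_dotProduct_mulVec]; constructor
    · rw [Matrix.IsHermitian, conjTranspose_eq_transpose_of_trivial]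
      subst hLam; ext i j; fin_cases i <;> fin_cases j <;> simp
    · intro x hx
      have hx01 : x 0 ≠ 0 ∨ x 1 ≠ 0 := by
        by_contra h
        push_neg at h
        exact hx (funext fun i => by fin_cases i <;> simp [h.1, h.2])
      subst hLam
      have hform : star x ⬝ᵥ (((1 / (2 * Δ)) •
          !![1 + a * s, ρ; ρ, 1 + b * s]) *ᵥ x) =
          (1 / (2 * Δ)) * ((1 + a * s) * x 0 ^ 2 + 2 * ρ * x 0 * x 1 +
            (1 + b * s) * x 1 ^ 2) := by
        simp [dotProduct, mulVec, Fin.sum_univ_two]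
        ring
      rw [hform]
      have h1a : 0 < 1 + a * s := by positivity
      have h1b : 0 < 1 + b * s := by positivity
      have hdet : 0 < (1 + a * s) * (1 + b * s) - ρ ^ 2 := by
        nlinarith [hs2, mul_pos ha hs, mul_pos hb hs, mul_pos hs hs, hab, sq_nonneg s]
      have key2 : 0 < (1 + a * s) * x 0 ^ 2 + 2 * ρ * x 0 * x 1 + (1 + b * s) * x 1 ^ 2 := by
        rcases hx01 with h | h
        · have e : (1 + b * s) * ((1 + a * s) * x 0 ^ 2 + 2 * ρ * x 0 * x 1 +
              (1 + b * s) * x 1 ^ 2) =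
              ((1 + b * s) * x 1 + ρ * x 0) ^ 2 +
                ((1 + a * s) * (1 + b * s) - ρ ^ 2) * x 0 ^ 2 := by ring
          have hp : 0 < (1 + b * s) * ((1 + a * s) * x 0 ^ 2 + 2 * ρ * x 0 * x 1 +
              (1 + b * s) * x 1 ^ 2) := by
            rw [e]
            have := mul_pos hdet (pow_two_pos_of_ne_zero h)
            nlinarith [sq_nonneg ((1 + b * s) * x 1 + ρ * x 0)]
          nlinarith [hp, h1b]
        · have e : (1 + a * s) * ((1 + a * s) * x 0 ^ 2 + 2 * ρ * x 0 * x 1 +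
              (1 + b * s) * x 1 ^ 2) =
              ((1 + a * s) * x 0 + ρ * x 1) ^ 2 +
                ((1 + a * s) * (1 + b * s) - ρ ^ 2) * x 1 ^ 2 := by ring
          have hp : 0 < (1 + a * s) * ((1 + a * s) * x 0 ^ 2 + 2 * ρ * x 0 * x 1 +
              (1 + b * s) * x 1 ^ 2) := by
            rw [e]
            have := mul_pos hdet (pow_two_pos_of_ne_zero h)
            nlinarith [sq_nonneg ((1 + a * s) * x 0 + ρ * x 1)]
          nlinarith [hp, h1a]
      positivity
  · subst hLam hW hS0
    rw [Matrix.smul_mul, Matrix.smul_mul, Matrix.mul_smul, key, smul_smul, smul_smul,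
      smul_smul]
    rw [show (4:ℝ) * (1 / (2 * Δ)) * (1 / (2 * Δ)) * Δ ^ 2 = 1 by field_simp; ring,
      one_smul]
end

section
/- Let Ω be an SPD real n×n matrix, let s ∈ ℝⁿ be a unit vector (sᵀs = 1), and let σ > 0. Then sᵀΩs > 0, and the matrix Λ := (1/2)·√(σ/(sᵀΩs))·s sᵀ is symmetric positive semidefinite and satisfies 4·Λ·Ω·Λ = σ·s sᵀ. -/
open Matrix

lemma vmv_symm {n : ℕ} (s : Fin n → ℝ) : (vecMulVec s s)ᵀ = vecMulVec s s := by
  ext i j; simp [vecMulVec_apply, mul_comm]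

lemma vmv_psd {n : ℕ} (s : Fin n → ℝ) : (vecMulVec s s).PosSemidef := by
  refine posSemidef_iff_dotProduct_mulVec.mpr ⟨?_, ?_⟩
  · exact vmv_symm s
  · intro x
    have : star x ⬝ᵥ (vecMulVec s s).mulVec x = (s ⬝ᵥ x) * (s ⬝ᵥ x) := by
      simp [dotProduct, mulVec, vecMulVec_apply, Finset.mul_sum, Finset.sum_mul]
      apply Finset.sum_congr rfl; intro i _
      apply Finset.sum_congr rfl; intro j _
      ring
    rw [this]
    exact mul_self_nonneg _

lemma key {n : ℕ} (W : Matrix (Fin n) (Fin n) ℝ) (s : Fin n → ℝ) :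
    vecMulVec s s * W * vecMulVec s s = (s ⬝ᵥ W.mulVec s) • vecMulVec s s := by
  ext i j
  simp [mul_apply, vecMulVec_apply, dotProduct, mulVec, Finset.mul_sum, Finset.sum_mul, smul_eq_mul]
  rw [Finset.sum_comm]
  apply Finset.sum_congr rfl; intro a _
  apply Finset.sum_congr rfl; intro b _
  ring

/-- Rank-one price covariance: for SPD `Ω`, a unit vector `s` and `σ > 0`, one has
`sᵀΩs > 0`, and `Λ = (1/2)√(σ/(sᵀΩs)) s sᵀ` is symmetric positive semidefinite with
`4 Λ Ω Λ = σ s sᵀ`. -/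
theorem stmt8 {n : ℕ} (W : Matrix (Fin n) (Fin n) ℝ) (hW : W.PosDef)
    (s : Fin n → ℝ) (hs : s ⬝ᵥ s = 1)
    (σ : ℝ) (hσ : 0 < σ)
    (Lam : Matrix (Fin n) (Fin n) ℝ)
    (hLam : Lam = ((1 / 2 : ℝ) * Real.sqrt (σ / (s ⬝ᵥ W.mulVec s))) • vecMulVec s s) :
    0 < s ⬝ᵥ W.mulVec s ∧ Lamᵀ = Lam ∧ Lam.PosSemidef ∧
      (4 : ℝ) • (Lam * W * Lam) = σ • vecMulVec s s := by
  have hs0 : s ≠ 0 := by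
    intro h; rw [h] at hs; simp at hs
  have hq : 0 < s ⬝ᵥ W.mulVec s := by
    have := hW.dotProduct_mulVec_pos hs0
    simpa using this
  set q := s ⬝ᵥ W.mulVec s with hqdef
  set c : ℝ := (1 / 2 : ℝ) * Real.sqrt (σ / q) with hcdef
  have hc : 0 ≤ c := by positivity
  refine ⟨hq, ?_, ?_, ?_⟩
  · rw [hLam, transpose_smul, vmv_symm]
  · have : Lam = vecMulVec (Real.sqrt c • s) (Real.sqrt c • s) := by
      rw [hLam]; ext i j
      simp [vecMulVec_apply, smul_eq_mul]
      rw [show √c * s i * (√c * s j) = (√c * √c) * (s i * s j) by ring,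
        Real.mul_self_sqrt hc]
    rw [this]; exact vmv_psd _
  · rw [hLam, Matrix.smul_mul, Matrix.smul_mul, Matrix.mul_smul, key,
      smul_smul, smul_smul, smul_smul]
    congr 1
    have hsq : Real.sqrt (σ / q) * Real.sqrt (σ / q) = σ / q := by
      exact Real.mul_self_sqrt (by positivity)
    show 4 * c * c * q = σ
    rw [hcdef, show (4:ℝ) * (1/2*√(σ/q)) * (1/2*√(σ/q)) * q = (√(σ/q)*√(σ/q))*q by ring, hsq]
    field_simp
end

section
/- Let Ω be an SPD real n×n matrix, let R be a real n×n matrix, let (s_1, …, s_n) be an orthonormal basis of ℝⁿ, and define χ²(Λ) := (1/2)·tr(Λᵀ Λ Ω − 2 Λᵀ R + Σ) for a fixed real n×n matrix Σ. Among all matrices of the form Λ(g) = Σ_{a=1}^n g_a · s_a s_aᵀ with g ∈ ℝⁿ, the loss χ²(Λ(g)) is minimized at the unique point g_a = (s_aᵀ R s_a)/(s_aᵀ Ω s_a) for a = 1, …, n. -/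
open Matrix

lemma myvmv_transpose {n : ℕ} (u v : Fin n → ℝ) :
    (vecMulVec u v)ᵀ = vecMulVec v u := by
  ext i j; simp [vecMulVec_apply, mul_comm]

lemma myvmv_mul_vmv {n : ℕ} (u v x y : Fin n → ℝ) :
    vecMulVec u v * vecMulVec x y = (v ⬝ᵥ x) • vecMulVec u y := by
  ext i j
  simp [Matrix.mul_apply, vecMulVec_apply, dotProduct, Finset.sum_mul, Finset.mul_sum]
  apply Finset.sum_congr rfl; intro k _; ring

lemma mytrace_vmv_mul {n : ℕ} (u v : Fin n → ℝ) (M : Matrix (Fin n) (Fin n) ℝ) :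
    (vecMulVec u v * M).trace = v ⬝ᵥ (M *ᵥ u) := by
  simp [Matrix.trace, Matrix.diag, Matrix.mul_apply, vecMulVec_apply, dotProduct, mulVec,
    Finset.mul_sum]
  rw [Finset.sum_comm]
  apply Finset.sum_congr rfl; intro k _
  apply Finset.sum_congr rfl; intro i _; ring

/-- The EigenLiquidity estimator: for SPD `Ω`, response `R`, an orthonormal basis
`s₁, …, sₙ` of `ℝⁿ` and the loss `χ²(Λ) = (1/2) tr(Λᵀ Λ Ω − 2 Λᵀ R + Σ)`, among all
matrices `Λ(g) = ∑ₐ gₐ sₐ sₐᵀ` the loss is minimized at the unique point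
`gₐ = (sₐᵀ R sₐ)/(sₐᵀ Ω sₐ)`. -/
theorem stmt11 {n : ℕ} (W R S : Matrix (Fin n) (Fin n) ℝ) (hW : W.PosDef)
    (s : Fin n → Fin n → ℝ)
    (hortho : ∀ a b : Fin n, s a ⬝ᵥ s b = if a = b then (1 : ℝ) else 0)
    (χ : Matrix (Fin n) (Fin n) ℝ → ℝ)
    (hχ : ∀ Lam : Matrix (Fin n) (Fin n) ℝ,
      χ Lam = (1 / 2 : ℝ) * (Lamᵀ * Lam * W - (2 : ℝ) • (Lamᵀ * R) + S).trace)
    (Lam : (Fin n → ℝ) → Matrix (Fin n) (Fin n) ℝ)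
    (hLam : ∀ g : Fin n → ℝ, Lam g = ∑ a : Fin n, g a • vecMulVec (s a) (s a))
    (gstar : Fin n → ℝ)
    (hgstar : ∀ a : Fin n, gstar a = (s a ⬝ᵥ R.mulVec (s a)) / (s a ⬝ᵥ W.mulVec (s a))) :
    (∀ g : Fin n → ℝ, χ (Lam gstar) ≤ χ (Lam g)) ∧
    (∀ g : Fin n → ℝ, χ (Lam g) = χ (Lam gstar) → g = gstar) := by
  set w : Fin n → ℝ := fun a => s a ⬝ᵥ W.mulVec (s a) with hw_def
  set r : Fin n → ℝ := fun a => s a ⬝ᵥ R.mulVec (s a) with hr_def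
  have hs_ne : ∀ a, s a ≠ 0 := by
    intro a h
    have := hortho a a
    simp [h] at this
  have hw_pos : ∀ a, 0 < w a := by
    intro a
    have := hW.dotProduct_mulVec_pos (hs_ne a)
    simpa [hw_def] using this
  have htr : ∀ g : Fin n → ℝ, (Lam g)ᵀ = Lam g := by
    intro g
    simp [hLam, transpose_sum, transpose_smul, myvmv_transpose]
  have hmul : ∀ g : Fin n → ℝ, Lam g * Lam g = ∑ a : Fin n, ((g a)^2) • vecMulVec (s a) (s a) := by
    intro g
    rw [hLam, Finset.sum_mul_sum]
    rw [Finset.sum_comm]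
    apply Finset.sum_congr rfl
    intro b _
    rw [Finset.sum_eq_single b]
    · rw [smul_mul_smul_comm, myvmv_mul_vmv, hortho]
      simp [pow_two, smul_smul, mul_comm]
    · intro a _ hab
      rw [smul_mul_smul_comm, myvmv_mul_vmv, hortho]
      simp [hab]
    · simp
  have key : ∀ g : Fin n → ℝ,
      χ (Lam g) = (∑ a : Fin n, ((1/2) * w a * (g a)^2 - g a * r a)) + (1/2) * S.trace := by
    intro g
    rw [hχ, htr, trace_add, trace_sub, trace_smul]
    rw [hmul, Finset.sum_mul, hLam g, Finset.sum_mul]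
    rw [trace_sum, trace_sum]
    simp only [smul_mul_assoc, trace_smul, mytrace_vmv_mul, smul_eq_mul]
    rw [Finset.sum_sub_distrib]
    ring_nf
    have e : (∑ x : Fin n, g x ^ 2 * (s x ⬝ᵥ W *ᵥ s x)) * (1/2)
        = ∑ x : Fin n, (1/2) * w x * g x ^ 2 := by
      rw [Finset.sum_mul]
      apply Finset.sum_congr rfl; intro a _; simp [hw_def]; ring
    rw [e]
    simp only [hr_def]
    ring
  have hr_eq : ∀ a, r a = w a * gstar a := by
    intro a
    rw [hgstar a]
    show r a = w a * (r a / w a)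
    rw [mul_comm, div_mul_cancel₀ _ (hw_pos a).ne']
  have diff : ∀ g : Fin n → ℝ,
      χ (Lam g) = χ (Lam gstar) + ∑ a : Fin n, (w a / 2) * (g a - gstar a)^2 := by
    intro g
    rw [key, key]
    have : ∀ a : Fin n, (1/2) * w a * (g a)^2 - g a * r a
        = ((1/2) * w a * (gstar a)^2 - gstar a * r a) + (w a / 2) * (g a - gstar a)^2 := by
      intro a; rw [hr_eq a]; ring
    rw [Finset.sum_congr rfl (fun a _ => this a), Finset.sum_add_distrib]
    ring
  constructor
  · intro g
    rw [diff g]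
    have : (0:ℝ) ≤ ∑ a : Fin n, (w a / 2) * (g a - gstar a)^2 :=
      Finset.sum_nonneg fun a _ => mul_nonneg (by linarith [hw_pos a]) (sq_nonneg _)
    linarith
  · intro g hg
    rw [diff g] at hg
    have hsum : ∑ a : Fin n, (w a / 2) * (g a - gstar a)^2 = 0 := by linarith
    have hzero := (Finset.sum_eq_zero_iff_of_nonneg
      (fun a _ => mul_nonneg (by linarith [hw_pos a]) (sq_nonneg (g a - gstar a)))).mp hsum
    funext a
    have := hzero a (Finset.mem_univ a)
    have h2 : (g a - gstar a)^2 = 0 := by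
      rcases mul_eq_zero.mp this with h | h
      · exact absurd h (ne_of_gt (by linarith [hw_pos a]))
      · exact h
    have := pow_eq_zero_iff (n := 2) (by norm_num) |>.mp h2
    linarith
end
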